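/- Let y = (y_{k,l})_{k+l ≤ 0} be a Z/2Z-valued family satisfying y_{k,l}+y_{k+1,l}+y_{k,l+1}=0 whenever k+l+1 ≤ 0, with y_{0,0}=1 and y_{h,-h}=1 for some h ≥ 0. Then there exists x in X extending y (i.e., x_{k,l}=y_{k,l} for k+l ≤ 0) such that the forward σ-trajectories of x and T^h S^{-h} x meet: there exist natural numbers p, q with σ^p(x) = σ^q(T^h S^{-h} x). -/

import Mathlib

open MeasureTheory Filter

/-- Configurations: `ℤ²`-indexed families of elements of `ℤ/2ℤ`. -/
abbrev Config := ℤ → ℤ → ZMod 2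

/-- The three-dot relation. -/
def threeDot (x : Config) : Prop :=
  ∀ k l : ℤ, x k l + x (k + 1) l + x k (l + 1) = 0

/-- The three-dot system `X`. -/
def Xset : Set Config := {x | threeDot x}

/-- The `ℤ²`-shift action: `shift k l x = T^k S^l x`. -/
def shift (k l : ℤ) (x : Config) : Config := fun a b => x (a + k) (b + l)

/-- The shift `T`. -/
def Tm : Config → Config := shift 1 0

/-- The shift `S`. -/
def Sm : Config → Config := shift 0 1

/-- `Y` : points of `X` with coordinate `1` at the origin. -/
def Yset : Set Config := {x | threeDot x ∧ x 0 0 = 1}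

/-- The map `σ : Y → Y`, extended to all configurations:
it equals `Tx` if `Tx` has a `1` at the origin, and `Sx` otherwise. -/
def sig (x : Config) : Config := if x 1 0 = 1 then Tm x else Sm x

/-- `Z` : points of `Y` with σ-antecedents of every depth (equivalently,
infinitely many σ-antecedents). -/
def Zset : Set Config := {x | x ∈ Yset ∧ ∀ n : ℕ, ∃ y ∈ Yset, sig^[n] y = x}

/-- `Z₂` : points of `Z` having two distinct σ-preimages in `Z`. -/
def Z2set : Set Config :=
  {x | x ∈ Zset ∧ ∃ y z, y ≠ z ∧ y ∈ Zset ∧ z ∈ Zset ∧ sig y = x ∧ sig z = x}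

/-- The σ-component of a point `x` of `Y`: points of the `ℤ²`-orbit of `x`
lying in `Y` whose forward σ-trajectory meets that of `x`. -/
def sigComp (x : Config) : Set Config :=
  {y | (∃ k l : ℤ, y = shift k l x) ∧ y ∈ Yset ∧ ∃ p q : ℕ, sig^[p] x = sig^[q] y}

/-- Aperiodicity of a configuration for the `ℤ²`-action. -/
def Aperiodic (x : Config) : Prop := ∀ k l : ℤ, shift k l x = x → k = 0 ∧ l = 0

namespace Stmt3Aux

lemma z2add : ∀ a : ZMod 2, a + a = 0 := by decide

lemma z2cases : ∀ a : ZMod 2, a ≠ 1 → a = 0 := by decide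

/-- Discrete antiderivative over ℤ (char 2). -/
noncomputable def ps (f : ℤ → ZMod 2) (k : ℤ) : ZMod 2 :=
  (∑ i ∈ Finset.Ico 0 k, f i) + (∑ i ∈ Finset.Ico k 0, f i)

lemma sum_top (f : ℤ → ZMod 2) {a b : ℤ} (hab : a ≤ b) :
    (∑ i ∈ Finset.Ico a (b+1), f i) = (∑ i ∈ Finset.Ico a b, f i) + f b := by
  have h : Finset.Ico a (b+1) = insert b (Finset.Ico a b) := by
    ext i; simp only [Finset.mem_Ico, Finset.mem_insert]; omega
  rw [h, Finset.sum_insert Finset.right_notMem_Ico, add_comm]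

lemma sum_bot (f : ℤ → ZMod 2) {a b : ℤ} (hab : a < b) :
    (∑ i ∈ Finset.Ico a b, f i) = f a + (∑ i ∈ Finset.Ico (a+1) b, f i) := by
  have h : Finset.Ico a b = insert a (Finset.Ico (a+1) b) := by
    ext i; simp only [Finset.mem_Ico, Finset.mem_insert]; omega
  rw [h, Finset.sum_insert (by simp)]

lemma ps_succ (f : ℤ → ZMod 2) (k : ℤ) : ps f (k+1) = ps f k + f k := by
  rcases le_or_gt 0 k with hk | hk
  · rw [ps, ps, sum_top f hk,
      show Finset.Ico (k+1) 0 = ∅ from Finset.Ico_eq_empty (by omega),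
      show Finset.Ico k 0 = ∅ from Finset.Ico_eq_empty (by omega)]
    ring
  · rw [ps, ps, sum_bot f (show k < 0 from hk),
      show Finset.Ico 0 (k+1) = ∅ from Finset.Ico_eq_empty (by omega),
      show Finset.Ico 0 k = ∅ from Finset.Ico_eq_empty (by omega)]
    linear_combination -z2add (f k)

lemma ps_tel (f : ℤ → ZMod 2) (a : ℤ) (d : ℕ) :
    ps f (a + d) = ps f a + ∑ i ∈ Finset.Ico a (a + d), f i := by
  induction d with
  | zero => simp
  | succ d ih =>
      have h1 : (a : ℤ) + ((d+1 : ℕ) : ℤ) = (a + d) + 1 := by push_cast; ring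
      rw [h1, ps_succ, ih, sum_top f (show a ≤ a + (d:ℤ) by omega)]
      ring

/-- One step of the construction: from diagonal `f` with marker position `a`,
produce the next diagonal (an antiderivative of `f` with a suitably chosen
constant) and the new marker position. -/
noncomputable def stp (h : ℤ) (st : (ℤ → ZMod 2) × ℤ) : (ℤ → ZMod 2) × ℤ :=
  ((fun k => (∑ i ∈ Finset.Ico (st.2 + 1) (h + 1), st.1 i) + ps st.1 (st.2 + 1) + ps st.1 k),
   st.2 + if ((∑ i ∈ Finset.Ico (st.2 + 1) (h + 1), st.1 i) + ps st.1 (st.2 + 1)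
       + ps st.1 (st.2 + 1) = 1) then 1 else 0)

noncomputable def F (y : Config) (h : ℤ) (n : ℕ) : ℤ → ZMod 2 :=
  ((stp h)^[n] ((fun k => y k (-k)), 0)).1

noncomputable def A (y : Config) (h : ℤ) (n : ℕ) : ℤ :=
  ((stp h)^[n] ((fun k => y k (-k)), 0)).2

variable (y : Config) (h : ℤ)

lemma F_succ (n : ℕ) : F y h (n+1) = fun k =>
    (∑ i ∈ Finset.Ico (A y h n + 1) (h + 1), F y h n i)
      + ps (F y h n) (A y h n + 1) + ps (F y h n) k := by
  rw [F, Function.iterate_succ_apply']; rfl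

lemma A_succ (n : ℕ) : A y h (n+1) = A y h n
    + if F y h (n+1) (A y h n + 1) = 1 then 1 else 0 := by
  rw [A, Function.iterate_succ_apply', F, Function.iterate_succ_apply']
  rfl

lemma F_rec (n : ℕ) (k : ℤ) : F y h (n+1) k + F y h (n+1) (k+1) = F y h n k := by
  rw [F_succ]
  simp only
  rw [ps_succ (F y h n) k]
  linear_combination z2add ((∑ i ∈ Finset.Ico (A y h n + 1) (h + 1), F y h n i))
    + z2add (ps (F y h n) (A y h n + 1)) + z2add (ps (F y h n) k)

lemma F_at_a (n : ℕ) : F y h (n+1) (A y h n + 1)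
    = ∑ i ∈ Finset.Ico (A y h n + 1) (h + 1), F y h n i := by
  rw [F_succ]
  simp only
  linear_combination z2add (ps (F y h n) (A y h n + 1))

lemma F_top (n : ℕ) (hA : A y h n ≤ h) : F y h (n+1) (h+1) = 0 := by
  rw [F_succ]
  simp only
  obtain ⟨d, hd⟩ : ∃ d : ℕ, (h : ℤ) + 1 = (A y h n + 1) + (d : ℤ) :=
    ⟨(h - A y h n).toNat, by omega⟩
  rw [hd, ps_tel]
  linear_combination z2add (∑ i ∈ Finset.Ico (A y h n + 1) (A y h n + 1 + (d:ℤ)), F y h n i)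
    + z2add (ps (F y h n) (A y h n + 1))

lemma A_le (hpos : 0 ≤ h) (n : ℕ) : A y h n ≤ h := by
  induction n with
  | zero => exact hpos
  | succ n ih =>
      rw [A_succ]
      rcases eq_or_lt_of_le ih with he | hl
      · rw [he, F_top y h n (le_of_eq he), if_neg (by decide)]
        omega
      · split <;> omega

lemma A_mono : Monotone (A y h) := by
  apply monotone_nat_of_le_succ
  intro n
  rw [A_succ]
  split <;> omega

lemma F_h (hpos : 0 ≤ h) (hh1 : y h (-h) = 1) (n : ℕ) : F y h n h = 1 := by
  induction n with
  | zero => exact hh1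
  | succ n ih =>
      have hrec := F_rec y h n h
      rw [F_top y h n (A_le y h hpos n), ih] at hrec
      simpa using hrec

lemma van (j : ℕ) : ∀ n : ℕ, (∀ i : ℕ, i ≤ j → A y h (n + i) = A y h n) →
    ∀ i : ℕ, 1 ≤ i → i ≤ j → F y h (n + j) (A y h n + (i : ℤ)) = 0 := by
  induction j with
  | zero => intro n _ i h1 h2; omega
  | succ j ihj =>
      intro n hconst i h1 h2
      have hAj : A y h (n + j) = A y h n := hconst j (by omega)
      have hAj1 : A y h (n + j + 1) = A y h n := hconst (j+1) le_rfl
      have hs : F y h (n + j + 1) (A y h n + 1) = 0 := by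
        apply z2cases
        intro hcon
        have hstep := A_succ y h (n + j)
        rw [hAj, if_pos hcon, hAj1] at hstep
        omega
      have inner : ∀ i : ℕ, 1 ≤ i → i ≤ j + 1 →
          F y h (n + j + 1) (A y h n + (i : ℤ)) = 0 := by
        intro i
        induction i with
        | zero => omega
        | succ i ihi =>
            intro _ hle
            rcases Nat.eq_zero_or_pos i with hi0 | hi1
            · subst hi0; simpa using hs
            · have e1 : F y h (n + j + 1) (A y h n + (i : ℤ)) = 0 := ihi hi1 (by omega)
              have e2 : F y h (n + j) (A y h n + (i : ℤ)) = 0 :=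
                ihj n (fun i' hi' => hconst i' (by omega)) i hi1 (by omega)
              have hrec := F_rec y h (n + j) (A y h n + (i : ℤ))
              rw [e1, e2] at hrec
              have hcast : A y h n + ((i+1 : ℕ) : ℤ) = (A y h n + (i : ℤ)) + 1 := by
                push_cast; ring
              rw [hcast]
              simpa using hrec
      simp only [← Nat.add_assoc]
      exact inner i h1 h2

lemma esc (hpos : 0 ≤ h) (hh1 : y h (-h) = 1) (n : ℕ) (hn : A y h n < h) :
    ∃ m : ℕ, A y h n < A y h m := by
  set j := (h - A y h n - 1).toNat with hj
  by_cases H : ∀ i : ℕ, i ≤ j + 1 → A y h (n + i) = A y h n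
  · exfalso
    have hvan := van y h j n (fun i hi => H i (by omega))
    have hAj : A y h (n + j) = A y h n := H j (by omega)
    have hsum : (∑ i ∈ Finset.Ico (A y h n + 1) (h + 1), F y h (n + j) i) = 1 := by
      rw [sum_top _ (by omega : A y h n + 1 ≤ h)]
      have hz : (∑ i ∈ Finset.Ico (A y h n + 1) h, F y h (n + j) i) = 0 := by
        apply Finset.sum_eq_zero
        intro i hi
        rw [Finset.mem_Ico] at hi
        have hi' : A y h n + (((i - A y h n).toNat : ℕ) : ℤ) = i := by omega
        rw [← hi']
        exact hvan _ (by omega) (by omega)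
      rw [hz, F_h y h hpos hh1 (n + j), zero_add]
    have hfa := F_at_a y h (n + j)
    rw [hAj, hsum] at hfa
    have hstep := A_succ y h (n + j)
    rw [hAj, hfa, if_pos rfl] at hstep
    have h2 : A y h (n + j + 1) = A y h n := H (j+1) le_rfl
    omega
  · push_neg at H
    obtain ⟨i, _, hne⟩ := H
    exact ⟨n + i, (A_mono y h (Nat.le_add_right n i)).lt_of_ne (Ne.symm hne)⟩

lemma reach (hpos : 0 ≤ h) (hh1 : y h (-h) = 1) : ∃ m : ℕ, A y h m = h := by
  suffices key : ∀ t n : ℕ, (h - A y h n).toNat ≤ t → ∃ m, A y h m = h by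
    exact key (h - A y h 0).toNat 0 le_rfl
  intro t
  induction t with
  | zero =>
      intro n hn
      exact ⟨n, by have := A_le y h hpos n; omega⟩
  | succ t iht =>
      intro n hn
      rcases eq_or_lt_of_le (A_le y h hpos n) with he | hl
      · exact ⟨n, he⟩
      · obtain ⟨m, hm⟩ := esc y h hpos hh1 n hl
        exact iht m (by have := A_le y h hpos m; omega)

/-- The extension of `y` to the whole plane. -/
noncomputable def xx (y : Config) (h : ℤ) : Config := fun k l =>
  if k + l ≤ 0 then y k l else F y h (k + l).toNat k

lemma xx_low (k l : ℤ) (hkl : k + l ≤ 0) : xx y h k l = y k l := if_pos hkl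

lemma xx_diag (n : ℕ) (k l : ℤ) (hkl : k + l = (n : ℤ) + 1) :
    xx y h k l = F y h (n+1) k := by
  rw [xx, if_neg (by omega)]
  congr 1
  omega

lemma xx_three (hy : ∀ k l : ℤ, k + l + 1 ≤ 0 → y k l + y (k + 1) l + y k (l + 1) = 0) :
    threeDot (xx y h) := by
  intro k l
  rcases lt_trichotomy (k + l) 0 with hlt | heq | hgt
  · rw [xx_low y h k l (by omega), xx_low y h (k+1) l (by omega),
      xx_low y h k (l+1) (by omega)]
    exact hy k l (by omega)
  · rw [xx_low y h k l (by omega),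
      xx_diag y h 0 (k+1) l (by push_cast; omega),
      xx_diag y h 0 k (l+1) (by push_cast; omega)]
    have hl : l = -k := by omega
    subst hl
    have h0 : y k (-k) = F y h 0 k := rfl
    have hrec := F_rec y h 0 k
    rw [h0]
    linear_combination -hrec + z2add (F y h 1 k) + z2add (F y h 1 (k+1))
  · obtain ⟨n, hn⟩ : ∃ n : ℕ, k + l = (n : ℤ) + 1 := ⟨(k + l - 1).toNat, by omega⟩
    rw [xx_diag y h n k l hn, xx_diag y h (n+1) (k+1) l (by push_cast; omega),
      xx_diag y h (n+1) k (l+1) (by push_cast; omega)]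
    have hrec := F_rec y h (n+1) k
    linear_combination -hrec + z2add (F y h (n+2) k) + z2add (F y h (n+2) (k+1))

lemma shift_shift (p q a b : ℤ) (x : Config) :
    shift p q (shift a b x) = shift (a + p) (b + q) x := by
  funext u v
  show x (u + p + a) (v + q + b) = x (u + (a + p)) (v + (b + q))
  rw [show u + p + a = u + (a + p) by ring, show v + q + b = v + (b + q) by ring]

lemma traj1 : ∀ n : ℕ, sig^[n] (xx y h) = shift (A y h n) ((n : ℤ) - A y h n) (xx y h) := by
  intro n
  induction n with
  | zero =>
      have hA0 : A y h 0 = 0 := rfl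
      rw [Function.iterate_zero_apply, hA0]
      funext u v
      show xx y h u v = xx y h (u + 0) (v + (0 - 0))
      norm_num
  | succ n ih =>
      rw [Function.iterate_succ_apply', ih]
      have htest : shift (A y h n) ((n : ℤ) - A y h n) (xx y h) 1 0
          = F y h (n+1) (A y h n + 1) := by
        show xx y h (1 + A y h n) (0 + ((n : ℤ) - A y h n)) = _
        rw [xx_diag y h n (1 + A y h n) (0 + ((n : ℤ) - A y h n)) (by ring)]
        congr 1
        ring
      simp only [sig]
      rw [htest]
      by_cases hc : F y h (n+1) (A y h n + 1) = 1
      · rw [if_pos hc]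
        have hA : A y h (n+1) = A y h n + 1 := by rw [A_succ, if_pos hc]
        have he : ((n+1 : ℕ) : ℤ) - (A y h n + 1) = ((n : ℤ) - A y h n) + 0 := by
          push_cast; ring
        rw [hA, he]
        show shift 1 0 (shift (A y h n) ((n : ℤ) - A y h n) (xx y h)) = _
        rw [shift_shift]
      · rw [if_neg hc]
        have hA : A y h (n+1) = A y h n := by rw [A_succ, if_neg hc, add_zero]
        have he : ((n+1 : ℕ) : ℤ) - A y h n = ((n : ℤ) - A y h n) + 1 := by
          push_cast; ring
        rw [hA, he]
        show shift 0 1 (shift (A y h n) ((n : ℤ) - A y h n) (xx y h)) = _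
        rw [shift_shift, add_zero]

lemma traj2 (hpos : 0 ≤ h) :
    ∀ n : ℕ, sig^[n] (shift h (-h) (xx y h)) = shift h ((n : ℤ) - h) (xx y h) := by
  intro n
  induction n with
  | zero =>
      rw [Function.iterate_zero_apply, show ((0 : ℕ) : ℤ) - h = -h by push_cast; ring]
  | succ n ih =>
      rw [Function.iterate_succ_apply', ih]
      have htest : shift h ((n : ℤ) - h) (xx y h) 1 0 = 0 := by
        show xx y h (1 + h) (0 + ((n : ℤ) - h)) = 0
        rw [xx_diag y h n (1 + h) (0 + ((n : ℤ) - h)) (by ring),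
          show 1 + h = h + 1 by ring]
        exact F_top y h n (A_le y h hpos n)
      simp only [sig]
      rw [htest, if_neg (by decide)]
      have he : ((n+1 : ℕ) : ℤ) - h = ((n : ℤ) - h) + 1 := by push_cast; ring
      rw [he]
      show shift 0 1 (shift h ((n : ℤ) - h) (xx y h)) = _
      rw [shift_shift, add_zero]

end Stmt3Aux

/-- Prolongation lemma: given a past `y` with `y_{0,0} = 1` and `y_{h,-h} = 1`,
there is an extension `x ∈ X` of `y` whose forward σ-trajectory meets that of
`T^h S^{-h} x`. -/
theorem stmt3 (y : Config)
    (hy : ∀ k l : ℤ, k + l + 1 ≤ 0 → y k l + y (k + 1) l + y k (l + 1) = 0)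
    (h0 : y 0 0 = 1) (h : ℕ) (hh : y (h : ℤ) (-(h : ℤ)) = 1) :
    ∃ x : Config, threeDot x ∧ (∀ k l : ℤ, k + l ≤ 0 → x k l = y k l) ∧
      ∃ p q : ℕ, sig^[p] x = sig^[q] (shift (h : ℤ) (-(h : ℤ)) x) := by
  have hpos : (0 : ℤ) ≤ (h : ℤ) := Int.natCast_nonneg h
  obtain ⟨m, hm⟩ := Stmt3Aux.reach y (h : ℤ) hpos hh
  refine ⟨Stmt3Aux.xx y (h : ℤ), Stmt3Aux.xx_three y (h : ℤ) hy,
    fun k l hkl => Stmt3Aux.xx_low y (h : ℤ) k l hkl, m, m, ?_⟩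
  rw [Stmt3Aux.traj1 y (h : ℤ) m, Stmt3Aux.traj2 y (h : ℤ) hpos m, hm]
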